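/- For every α ∈ [0,1), the quartic f(λ) = λ⁴ + (4−α²)λ³ + (11α⁴/4 − 12α² − 4)λ² + (2α⁶ − α⁴ − 20α² − 32)λ + 5α⁶ − 21α⁴ + 16α² − 32 has a real root strictly greater than the local bound 2(1+α). -/
import Mathlib

/-- for every `α ∈ [0,1)`, the quartic
`f(λ) = λ⁴ + (4−α²)λ³ + (11α⁴/4 − 12α² − 4)λ² + (2α⁶−α⁴−20α²−32)λ + 5α⁶−21α⁴+16α²−32`
has a real root strictly greater than the local bound `2(1+α)`. -/
theorem quartic_root_above_local_bound (α : ℝ) (hα : α ∈ Set.Ico (0:ℝ) 1) :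
    ∃ t : ℝ,
      t ^ 4 + (4 - α ^ 2) * t ^ 3 + (11 * α ^ 4 / 4 - 12 * α ^ 2 - 4) * t ^ 2
        + (2 * α ^ 6 - α ^ 4 - 20 * α ^ 2 - 32) * t
        + 5 * α ^ 6 - 21 * α ^ 4 + 16 * α ^ 2 - 32 = 0
      ∧ 2 * (1 + α) < t := by
  obtain ⟨h0, h1⟩ := hα
  set f : ℝ → ℝ := fun t =>
    t ^ 4 + (4 - α ^ 2) * t ^ 3 + (11 * α ^ 4 / 4 - 12 * α ^ 2 - 4) * t ^ 2
      + (2 * α ^ 6 - α ^ 4 - 20 * α ^ 2 - 32) * t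
      + 5 * α ^ 6 - 21 * α ^ 4 + 16 * α ^ 2 - 32 with hf
  have hab : (2 * (1 + α) : ℝ) ≤ 6 := by nlinarith
  have hcont : ContinuousOn f (Set.Icc (2 * (1 + α)) 6) := by
    apply Continuous.continuousOn; fun_prop
  have hfa : f (2 * (1 + α)) < 0 := by
    have key : f (2 * (1 + α)) = 4 * (α - 1) ^ 3 * (α + 2) ^ 4 := by
      simp only [hf]; ring
    rw [key]
    have h2 : (0:ℝ) < (α + 2) ^ 4 := by positivity
    nlinarith [pow_pos (show (0:ℝ) < 1 - α by linarith) 3]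
  have hfb : 0 < f 6 := by
    have key : f 6 = 17 * α ^ 6 + 72 * α ^ 4 - 752 * α ^ 2 + 1792 := by
      simp only [hf]; ring
    rw [key]; nlinarith [sq_nonneg α, pow_nonneg h0 4, pow_nonneg h0 6, sq_nonneg (α - 1), sq_nonneg (α + 1)]
  have hmem : (0:ℝ) ∈ Set.Ioo (f (2 * (1 + α))) (f 6) := ⟨hfa, hfb⟩
  obtain ⟨t, ht, hft⟩ := intermediate_value_Ioo hab hcont hmem
  exact ⟨t, hft, ht.1⟩
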